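/- Every up-complete ∨-semilattice (a dcpo in which every nonempty finite subset has a supremum) endowed with the Scott topology is well-filtered. -/

import Mathlib

universe u

/-- A subset is Scott open: an upper set inaccessible by directed suprema. -/
def ScottOpen {α : Type u} [Preorder α] (U : Set α) : Prop :=
  IsUpperSet U ∧ ∀ d : Set α, d.Nonempty → DirectedOn (· ≤ ·) d →
    ∀ a : α, IsLUB d a → a ∈ U → (d ∩ U).Nonempty

/-- A subset is Scott closed: a lower set closed under directed suprema. -/
def ScottClosed {α : Type u} [Preorder α] (C : Set α) : Prop :=
  IsLowerSet C ∧ ∀ d : Set α, d ⊆ C → d.Nonempty → DirectedOn (· ≤ ·) d →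
    ∀ a : α, IsLUB d a → a ∈ C

/-- A dcpo: every nonempty directed subset has a supremum. -/
def IsDcpo (α : Type u) [Preorder α] : Prop :=
  ∀ d : Set α, d.Nonempty → DirectedOn (· ≤ ·) d → ∃ a, IsLUB d a

/-- Compactness with respect to the Scott topology. -/
def ScottCompact {α : Type u} [Preorder α] (K : Set α) : Prop :=
  ∀ 𝒰 : Set (Set α), (∀ U ∈ 𝒰, ScottOpen U) → K ⊆ ⋃₀ 𝒰 →
    ∃ F : Set (Set α), F ⊆ 𝒰 ∧ F.Finite ∧ K ⊆ ⋃₀ F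

/-- Well-filteredness of the Scott topology of a poset. -/
def WellFiltered (α : Type u) [Preorder α] : Prop :=
  ∀ 𝒞 : Set (Set α), 𝒞.Nonempty →
    (∀ K ∈ 𝒞, ScottCompact K ∧ IsUpperSet K) →
    DirectedOn (fun A B : Set α => B ⊆ A) 𝒞 →
    ∀ U : Set α, ScottOpen U → ⋂₀ 𝒞 ⊆ U → ∃ K ∈ 𝒞, K ⊆ U

/-- The Hoare power construction: Scott closed subsets ordered by inclusion. -/
structure HPoset (α : Type u) [Preorder α] where
  carrier : Set α
  closed' : ScottClosed carrier

instance {α : Type u} [Preorder α] : PartialOrder (HPoset α) where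
  le A B := A.carrier ⊆ B.carrier
  le_refl _ := subset_rfl
  le_trans _ _ _ h h' := Set.Subset.trans h h'
  le_antisymm A B h h' := by
    cases A; cases B
    simp only [HPoset.mk.injEq]
    exact subset_antisymm h h'

/-- The Smyth power construction: nonempty Scott compact saturated subsets
ordered by reverse inclusion. -/
structure QPoset (α : Type u) [Preorder α] where
  carrier : Set α
  nonempty' : carrier.Nonempty
  compact' : ScottCompact carrier
  upper' : IsUpperSet carrier

instance {α : Type u} [Preorder α] : PartialOrder (QPoset α) where
  le K K' := K'.carrier ⊆ K.carrier
  le_refl _ := subset_rfl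
  le_trans _ _ _ h h' := Set.Subset.trans h' h
  le_antisymm K K' h h' := by
    cases K; cases K'
    simp only [QPoset.mk.injEq]
    exact subset_antisymm h' h

/-- The lattice of Scott open subsets ordered by inclusion. -/
structure OpenSet (α : Type u) [Preorder α] where
  carrier : Set α
  open' : ScottOpen carrier

instance {α : Type u} [Preorder α] : PartialOrder (OpenSet α) where
  le A B := A.carrier ⊆ B.carrier
  le_refl _ := subset_rfl
  le_trans _ _ _ h h' := Set.Subset.trans h h'
  le_antisymm A B h h' := by
    cases A; cases B
    simp only [OpenSet.mk.injEq]
    exact subset_antisymm h h'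

section Aux

variable {P : Type u} [PartialOrder P]

lemma scottOpen_compl_of_closed {C : Set P} (h : ScottClosed C) : ScottOpen Cᶜ := by
  refine ⟨h.1.compl, fun d hne hdir a hlub ha => ?_⟩
  by_contra hcon
  rw [Set.not_nonempty_iff_eq_empty] at hcon
  have hdC : d ⊆ C := by
    intro x hx
    by_contra hxC
    exact Set.eq_empty_iff_forall_notMem.mp hcon x ⟨hx, hxC⟩
  exact ha (h.2 d hdC hne hdir a hlub)

lemma scottClosed_compl_of_open {U : Set P} (h : ScottOpen U) : ScottClosed Uᶜ := by
  refine ⟨h.1.compl, fun d hsub hne hdir a hlub => ?_⟩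
  intro haU
  obtain ⟨x, hxd, hxU⟩ := h.2 d hne hdir a hlub haU
  exact hsub hxd hxU

lemma scottClosed_inter {C D : Set P} (hC : ScottClosed C) (hD : ScottClosed D) :
    ScottClosed (C ∩ D) :=
  ⟨hC.1.inter hD.1, fun d hsub hne hdir a hlub =>
    ⟨hC.2 d (fun x hx => (hsub hx).1) hne hdir a hlub,
     hD.2 d (fun x hx => (hsub hx).2) hne hdir a hlub⟩⟩

lemma scottClosed_sInter {S : Set (Set P)} (h : ∀ C ∈ S, ScottClosed C) :
    ScottClosed (⋂₀ S) := by
  constructor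
  · intro x y hyx hx
    intro B hB
    exact (h B hB).1 hyx (hx B hB)
  · intro d hsub hne hdir a hlub B hB
    exact (h B hB).2 d (fun x hx => hsub hx B hB) hne hdir a hlub

lemma scottOpen_sUnion {S : Set (Set P)} (h : ∀ U ∈ S, ScottOpen U) : ScottOpen (⋃₀ S) := by
  constructor
  · intro x y hxy hx
    obtain ⟨B, hB, hxB⟩ := hx
    exact ⟨B, hB, (h B hB).1 hxy hxB⟩
  · intro d hne hdir a hlub ha
    obtain ⟨B, hB, haB⟩ := ha
    obtain ⟨x, hxd, hxB⟩ := (h B hB).2 d hne hdir a hlub haB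
    exact ⟨x, hxd, B, hB, hxB⟩

lemma scottCompact_inter_closed {K C : Set P} (hK : ScottCompact K) (hC : ScottClosed C) :
    ScottCompact (K ∩ C) := by
  intro 𝒰 hop hcov
  obtain ⟨F, hF𝒰, hFfin, hKF⟩ := hK (insert Cᶜ 𝒰)
    (by
      rintro B (rfl | hB)
      · exact scottOpen_compl_of_closed hC
      · exact hop B hB)
    (by
      intro k hk
      by_cases hkC : k ∈ C
      · obtain ⟨B, hB, hkB⟩ := hcov ⟨hk, hkC⟩
        exact ⟨B, Set.mem_insert_of_mem _ hB, hkB⟩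
      · exact ⟨Cᶜ, Set.mem_insert _ _, hkC⟩)
  refine ⟨F ∩ 𝒰, Set.inter_subset_right, hFfin.subset Set.inter_subset_left, ?_⟩
  rintro x ⟨hxK, hxC⟩
  obtain ⟨B, hBF, hxB⟩ := hKF hxK
  rcases hF𝒰 hBF with rfl | hB𝒰
  · exact absurd hxC hxB
  · exact ⟨B, ⟨hBF, hB𝒰⟩, hxB⟩

lemma exists_bound_sUnion {α β : Type*} {r : β → β → Prop} {f : β → Set α} {D : Set β}
    (hD : DirectedOn r D) (hDne : D.Nonempty)
    (hmono : ∀ b ∈ D, ∀ b' ∈ D, r b b' → f b ⊆ f b')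
    {F : Set (Set α)} (hFfin : F.Finite) (hFsub : F ⊆ f '' D) :
    ∃ b ∈ D, ⋃₀ F ⊆ f b := by
  have H : ∀ {F : Set (Set α)}, F.Finite → F ⊆ f '' D → ∃ b ∈ D, ⋃₀ F ⊆ f b := by
    intro F hFfin
    refine Set.Finite.induction_on (motive := fun F _ => F ⊆ f '' D → ∃ b ∈ D, ⋃₀ F ⊆ f b) F hFfin (fun _ => ?_) ?_
    · obtain ⟨b, hb⟩ := hDne
      exact ⟨b, hb, by simp⟩
    · intro B F' _ _ ih hsub
      obtain ⟨b1, hb1, rfl⟩ := hsub (Set.mem_insert _ _)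
      obtain ⟨b2, hb2, hb2sub⟩ := ih (fun x hx => hsub (Set.mem_insert_of_mem _ hx))
      obtain ⟨b3, hb3, hr1, hr2⟩ := hD b1 hb1 b2 hb2
      refine ⟨b3, hb3, ?_⟩
      rw [Set.sUnion_insert]
      exact Set.union_subset (hmono b1 hb1 b3 hb3 hr1)
        (hb2sub.trans (hmono b2 hb2 b3 hb3 hr2))
  exact H hFfin hFsub

end Aux

theorem upComplete_semilattice_wellFiltered {P : Type u} [PartialOrder P]
    (hd : IsDcpo P) (hsup : ∀ x y : P, ∃ z, IsLUB {x, y} z) :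
    WellFiltered P := by
  choose j hj using hsup
  have jle1 : ∀ x y : P, x ≤ j x y := fun x y => (hj x y).1 (Set.mem_insert _ _)
  have jle2 : ∀ x y : P, y ≤ j x y := fun x y => (hj x y).1 (Set.mem_insert_of_mem _ rfl)
  have jle_iff : ∀ x y u : P, j x y ≤ u ↔ x ≤ u ∧ y ≤ u := by
    intro x y u
    constructor
    · intro h
      exact ⟨(jle1 x y).trans h, (jle2 x y).trans h⟩
    · rintro ⟨h1, h2⟩
      refine (hj x y).2 ?_
      rintro z (rfl | rfl)
      · exact h1
      · exact h2
  have jmono2 : ∀ (x : P) {y y' : P}, y ≤ y' → j x y ≤ j x y' := by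
    intro x y y' h
    exact (jle_iff x y (j x y')).mpr ⟨jle1 x y', h.trans (jle2 x y')⟩
  have jmono1 : ∀ (p : P) {x x' : P}, x ≤ x' → j x p ≤ j x' p := by
    intro p x x' h
    exact (jle_iff x p (j x' p)).mpr ⟨h.trans (jle1 x' p), jle2 x' p⟩
  have jxx : ∀ x : P, j x x ≤ x := fun x => (jle_iff x x x).mpr ⟨le_rfl, le_rfl⟩
  have himg2dir : ∀ (x : P) (d : Set P), DirectedOn (· ≤ ·) d →
      DirectedOn (· ≤ ·) ((fun c => j x c) '' d) := by
    rintro x d hdir _ ⟨c, hc, rfl⟩ _ ⟨c', hc', rfl⟩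
    obtain ⟨e, he, h1, h2⟩ := hdir c hc c' hc'
    exact ⟨j x e, ⟨e, he, rfl⟩, jmono2 x h1, jmono2 x h2⟩
  have himg1dir : ∀ (p : P) (d : Set P), DirectedOn (· ≤ ·) d →
      DirectedOn (· ≤ ·) ((fun c => j c p) '' d) := by
    rintro p d hdir _ ⟨c, hc, rfl⟩ _ ⟨c', hc', rfl⟩
    obtain ⟨e, he, h1, h2⟩ := hdir c hc c' hc'
    exact ⟨j e p, ⟨e, he, rfl⟩, jmono1 p h1, jmono1 p h2⟩
  have himg2lub : ∀ (x : P) (d : Set P) (a : P), d.Nonempty → IsLUB d a →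
      IsLUB ((fun c => j x c) '' d) (j x a) := by
    intro x d a hne hlub
    constructor
    · rintro _ ⟨c, hc, rfl⟩
      exact jmono2 x (hlub.1 hc)
    · intro u hu
      obtain ⟨c0, hc0⟩ := hne
      refine (jle_iff x a u).mpr ⟨(jle1 x c0).trans (hu ⟨c0, hc0, rfl⟩), ?_⟩
      exact hlub.2 (fun c hc => (jle2 x c).trans (hu ⟨c, hc, rfl⟩))
  have himg1lub : ∀ (p : P) (d : Set P) (a : P), d.Nonempty → IsLUB d a →
      IsLUB ((fun c => j c p) '' d) (j a p) := by
    intro p d a hne hlub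
    constructor
    · rintro _ ⟨c, hc, rfl⟩
      exact jmono1 p (hlub.1 hc)
    · intro u hu
      obtain ⟨c0, hc0⟩ := hne
      refine (jle_iff a p u).mpr ⟨?_, (jle2 c0 p).trans (hu ⟨c0, hc0, rfl⟩)⟩
      exact hlub.2 (fun c hc => (jle1 c p).trans (hu ⟨c, hc, rfl⟩))
  intro 𝒞 h𝒞ne hKprop hdir U hUopen hUsub
  by_contra hno
  push_neg at hno
  have hAclosed : ScottClosed Uᶜ := scottClosed_compl_of_open hUopen
  set S : Set (Set P) := {C | ScottClosed C ∧ C ⊆ Uᶜ ∧ ∀ K ∈ 𝒞, (C ∩ K).Nonempty} with hSdef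
  have hAS : Uᶜ ∈ S := by
    refine ⟨hAclosed, subset_rfl, fun K hK => ?_⟩
    obtain ⟨x, hxK, hxU⟩ := Set.not_subset.mp (hno K hK)
    exact ⟨x, hxU, hxK⟩
  have hchaincond : ∀ c ⊆ S, IsChain (· ⊆ ·) c → c.Nonempty →
      ∃ lb ∈ S, ∀ s ∈ c, lb ⊆ s := by
    intro c hcS hchain hcne
    refine ⟨⋂₀ c, ⟨scottClosed_sInter (fun B hB => (hcS hB).1), ?_, ?_⟩,
      fun s hs => Set.sInter_subset_of_mem hs⟩
    · obtain ⟨B, hB⟩ := hcne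
      exact (Set.sInter_subset_of_mem hB).trans (hcS hB).2.1
    · intro K hK
      by_contra hempty
      rw [Set.not_nonempty_iff_eq_empty] at hempty
      have hKcov : K ⊆ ⋃₀ (compl '' c) := by
        intro k hkK
        have hk : k ∉ ⋂₀ c := fun hmem =>
          Set.eq_empty_iff_forall_notMem.mp hempty k ⟨hmem, hkK⟩
        rw [Set.mem_sInter] at hk
        push_neg at hk
        obtain ⟨B, hBc, hkB⟩ := hk
        exact ⟨Bᶜ, ⟨B, hBc, rfl⟩, hkB⟩
      obtain ⟨F, hFsub, hFfin, hKF⟩ := (hKprop K hK).1 (compl '' c)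
        (by rintro _ ⟨B, hBc, rfl⟩; exact scottOpen_compl_of_closed (hcS hBc).1) hKcov
      have hdirc : DirectedOn (fun B B' : Set P => B' ⊆ B) c := by
        intro x hx y hy
        rcases hchain.total hx hy with h | h
        · exact ⟨x, hx, subset_rfl, h⟩
        · exact ⟨y, hy, h, subset_rfl⟩
      obtain ⟨B0, hB0c, hB0⟩ := exists_bound_sUnion hdirc hcne
        (fun b _ b' _ (h : b' ⊆ b) => Set.compl_subset_compl.mpr h) hFfin hFsub
      obtain ⟨x, hxB0, hxK⟩ := (hcS hB0c).2.2 K hK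
      exact (hB0 (hKF hxK)) hxB0
  obtain ⟨C, hCsubU, hCminl⟩ := zorn_superset_nonempty S hchaincond Uᶜ hAS
  obtain ⟨hCcl, hCA, hCK⟩ := hCminl.1
  have hCmin : ∀ B ∈ S, B ⊆ C → B = C := fun B hB hBC =>
    subset_antisymm hBC (hCminl.2 hB hBC)
  -- the open sets V x and G K
  set V : P → Set P := fun x => {p | j x p ∉ C} with hVdef
  have hVopen : ∀ x : P, ScottOpen (V x) := by
    intro x
    constructor
    · intro p q hpq hp hq
      exact hp (hCcl.1 (jmono2 x hpq) hq)
    · intro d hne hdird a hlub ha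
      by_contra hcon
      rw [Set.not_nonempty_iff_eq_empty] at hcon
      have hsubC : (fun c => j x c) '' d ⊆ C := by
        rintro _ ⟨e, he, rfl⟩
        by_contra h
        exact Set.eq_empty_iff_forall_notMem.mp hcon e ⟨he, h⟩
      exact ha (hCcl.2 _ hsubC (hne.image _) (himg2dir x d hdird) _ (himg2lub x d a hne hlub))
  have hVmono : ∀ x x' : P, x ≤ x' → V x ⊆ V x' := by
    intro x x' h p hp hcontra
    exact hp (hCcl.1 (jmono1 p h) hcontra)
  set G : Set P → Set P := fun K => {x | K ∩ C ⊆ V x} with hGdef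
  have hGopen : ∀ K ∈ 𝒞, ScottOpen (G K) := by
    intro K hK
    constructor
    · intro x x' hxx' hx
      exact hx.trans (hVmono x x' hxx')
    · intro d hne hdird a hlub ha
      have hcov : K ∩ C ⊆ ⋃₀ (V '' d) := by
        intro p hp
        have hpa : j a p ∉ C := ha hp
        by_contra hnc
        have hsubC : (fun c => j c p) '' d ⊆ C := by
          rintro _ ⟨e, he, rfl⟩
          by_contra h
          exact hnc ⟨V e, ⟨e, he, rfl⟩, h⟩
        exact hpa (hCcl.2 _ hsubC (hne.image _) (himg1dir p d hdird) _
          (himg1lub p d a hne hlub))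
      obtain ⟨F, hFsub, hFfin, hKCF⟩ := scottCompact_inter_closed (hKprop K hK).1 hCcl
        (V '' d) (by rintro _ ⟨e, _, rfl⟩; exact hVopen e) hcov
      obtain ⟨cs, hcsd, hcs⟩ := exists_bound_sUnion hdird hne
        (fun b _ b' _ h => hVmono b b' h) hFfin hFsub
      exact ⟨cs, hcsd, hKCF.trans hcs⟩
  have hGmono : ∀ K K' : Set P, K' ⊆ K → G K ⊆ G K' := by
    intro K K' h x hx
    exact (Set.inter_subset_inter_left C h).trans hx
  by_cases hcase : ∀ x ∈ C, ∀ K ∈ 𝒞, (({c | c ∈ C ∧ j x c ∈ C}) ∩ K).Nonempty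
  · -- C is closed under joins, hence directed; its sup gives a contradiction
    have hjoin : ∀ x ∈ C, ∀ y ∈ C, j x y ∈ C := by
      intro x hx y hy
      have hCxcl : ScottClosed {c | c ∈ C ∧ j x c ∈ C} := by
        constructor
        · intro a b hba ha
          exact ⟨hCcl.1 hba ha.1, hCcl.1 (jmono2 x hba) ha.2⟩
        · intro d hsub hne hdird a hlub
          refine ⟨hCcl.2 d (fun p hp => (hsub hp).1) hne hdird a hlub, ?_⟩
          exact hCcl.2 _ (by rintro _ ⟨e, he, rfl⟩; exact (hsub he).2) (hne.image _)
            (himg2dir x d hdird) _ (himg2lub x d a hne hlub)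
      have heq : {c | c ∈ C ∧ j x c ∈ C} = C :=
        hCmin _ ⟨hCxcl, fun p hp => hCA hp.1, hcase x hx⟩ (fun p hp => hp.1)
      rw [← heq] at hy
      exact hy.2
    have hCne : C.Nonempty := by
      obtain ⟨K0, hK0⟩ := h𝒞ne
      obtain ⟨c0, hc0, _⟩ := hCK K0 hK0
      exact ⟨c0, hc0⟩
    have hCdir : DirectedOn (· ≤ ·) C := fun x hx y hy =>
      ⟨j x y, hjoin x hx y hy, jle1 x y, jle2 x y⟩
    obtain ⟨s, hs⟩ := hd C hCne hCdir
    have hsC : s ∈ C := hCcl.2 C subset_rfl hCne hCdir s hs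
    have hsU : s ∈ U := by
      refine hUsub ?_
      intro K hK
      obtain ⟨e, heC, heK⟩ := hCK K hK
      exact (hKprop K hK).2 (hs.1 heC) heK
    exact (hCA hsC) hsU
  · push_neg at hcase
    obtain ⟨x0, hx0C, Kj, hKj, hKjempty⟩ := hcase
    set W := ⋃₀ (G '' 𝒞) with hWdef
    have hWopen : ScottOpen W :=
      scottOpen_sUnion (by rintro _ ⟨K, hK, rfl⟩; exact hGopen K hK)
    have hx0W : x0 ∈ W := by
      refine ⟨G Kj, ⟨Kj, hKj, rfl⟩, ?_⟩
      intro p hp hjC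
      exact Set.eq_empty_iff_forall_notMem.mp hKjempty p ⟨⟨hp.2, hjC⟩, hp.1⟩
    have hC'cl : ScottClosed (C ∩ Wᶜ) :=
      scottClosed_inter hCcl (scottClosed_compl_of_open hWopen)
    have hnotS : ¬ (∀ K ∈ 𝒞, ((C ∩ Wᶜ) ∩ K).Nonempty) := by
      intro hall
      have heq := hCmin (C ∩ Wᶜ) ⟨hC'cl, Set.inter_subset_left.trans hCA, hall⟩
        Set.inter_subset_left
      have hx0' : x0 ∈ C ∩ Wᶜ := by rw [heq]; exact hx0C
      exact hx0'.2 hx0W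
    push_neg at hnotS
    obtain ⟨K0, hK0, hK0empty⟩ := hnotS
    have hK0cov : K0 ∩ C ⊆ ⋃₀ (G '' 𝒞) := by
      intro p hp
      by_contra hpW
      exact Set.eq_empty_iff_forall_notMem.mp hK0empty p ⟨⟨hp.2, hpW⟩, hp.1⟩
    obtain ⟨F, hFsub, hFfin, hK0F⟩ := scottCompact_inter_closed (hKprop K0 hK0).1 hCcl
      (G '' 𝒞) (by rintro _ ⟨K, hK, rfl⟩; exact hGopen K hK) hK0cov
    obtain ⟨Ks, hKs𝒞, hKs⟩ := exists_bound_sUnion hdir h𝒞ne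
      (fun b _ b' _ h => hGmono b b' h) hFfin hFsub
    obtain ⟨Kss, hKss𝒞, hKss0, hKsss⟩ := hdir K0 hK0 Ks hKs𝒞
    obtain ⟨x, hxC, hxKss⟩ := hCK Kss hKss𝒞
    have hx1 : x ∈ G Ks := hKs (hK0F ⟨hKss0 hxKss, hxC⟩)
    have hx2 : x ∈ V x := hx1 ⟨hKsss hxKss, hxC⟩
    exact hx2 (hCcl.1 (jxx x) hxC)
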